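/- Let p be a prime, s a positive integer, k = F_{p^s} and W = W(k) the ring of Witt vectors over k. Let W ×_k W denote the subring of W × W consisting of pairs (a, b) with a ≡ b mod (p). Suppose S is a subring of W ×_k W that contains the diagonal {(w, w) : w ∈ W}, is stable under multiplication by diagonal elements (i.e. S is a W-submodule for the diagonal W-action), and contains some element (a, b) with a − b = p. Then S = W ×_k W. -/
import Mathlib


/-- Let `W = W(𝔽_{p^s})` and let `W ×_k W` be the subring of `W × W`
of pairs congruent modulo `(p)`.  If `S` is a subring of `W × W` contained in the fiber
product, containing the diagonal, stable under multiplication by diagonal elements, and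
containing an element `(a, b)` with `a - b = p`, then `S` equals the fiber product. -/
theorem subring_of_fiberProduct_eq (p : ℕ) [Fact p.Prime] (s : ℕ) (hs : 0 < s)
    (S : Subring (WittVector p (GaloisField p s) × WittVector p (GaloisField p s)))
    (hfib : ∀ x ∈ S, x.1 - x.2 ∈ Ideal.span {(p : WittVector p (GaloisField p s))})
    (hdiag : ∀ w : WittVector p (GaloisField p s), (w, w) ∈ S)
    (hstab : ∀ w : WittVector p (GaloisField p s), ∀ x ∈ S, (w, w) * x ∈ S)
    (hp : ∃ x ∈ S, x.1 - x.2 = (p : WittVector p (GaloisField p s))) :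
    ∀ x : WittVector p (GaloisField p s) × WittVector p (GaloisField p s),
      x ∈ S ↔ x.1 - x.2 ∈ Ideal.span {(p : WittVector p (GaloisField p s))} := by
  intro x
  constructor
  · exact hfib x
  · intro hx
    obtain ⟨a, ha, hab⟩ := hp
    rw [Ideal.mem_span_singleton] at hx
    obtain ⟨c, hc⟩ := hx
    have h1 : (c, c) * a ∈ S := hstab c a ha
    have h2 : ((x.2 - c * a.2, x.2 - c * a.2) :
        WittVector p (GaloisField p s) × WittVector p (GaloisField p s)) ∈ S :=
      hdiag _
    have h3 := S.add_mem h1 h2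
    have hx1 : x.1 = c * a.1 + (x.2 - c * a.2) := by
      have : x.1 - x.2 = c * (a.1 - a.2) := by rw [hab]; linear_combination hc
      ring_nf
      linear_combination this
    have : (c, c) * a + (x.2 - c * a.2, x.2 - c * a.2) = x := by
      ext
      · simp [hx1.symm]
      · simp
    rwa [this] at h3
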